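/- A multivalued stream transformer T : (ℕ → A) → Set (ℕ → B) with all values nonempty is weakly causal if and only if it is nonexpansive, and it is strongly causal if and only if it is contractive. -/
import Mathlib


open Metric

/-- The prefix metric on streams: `dist f g = (1/2)^n` where `n` is the first index
at which `f` and `g` differ (Mathlib's `PiNat` distance). -/
noncomputable instance streamMetricSpace {A : Type*} : MetricSpace (ℕ → A) :=
  letI : TopologicalSpace A := ⊥
  haveI : DiscreteTopology A := ⟨rfl⟩
  PiNat.metricSpace

/-- A multivalued stream transformer `T` is `δ`-causal if whenever two input streams agree
on all indices `< k`, the sets of restrictions to indices `< k + δ` of their output sets agree. -/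
def IsCausal {A B : Type*} (δ : ℕ) (T : (ℕ → A) → Set (ℕ → B)) : Prop :=
  ∀ (k : ℕ) (f g : ℕ → A), (∀ i < k, f i = g i) →
    (fun (u : ℕ → B) (i : Fin (k + δ)) => u (i : ℕ)) '' T f =
      (fun (u : ℕ → B) (i : Fin (k + δ)) => u (i : ℕ)) '' T g

/-- For metric spaces, T is an l-contraction if every output of T x admits an output of T y
at distance at most l * dist x y. -/
def IsMultiContraction {M N : Type*} [MetricSpace M] [MetricSpace N]
    (l : ℝ) (T : M → Set N) : Prop :=
  ∀ x y : M, ∀ u ∈ T x, ∃ v ∈ T y, dist u v ≤ l * dist x y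

lemma stream_dist_le_iff {A : Type*} {f g : ℕ → A} {n : ℕ} :
    dist f g ≤ (1/2 : ℝ)^n ↔ ∀ i < n, f i = g i := by
  have := @PiNat.mem_cylinder_iff_dist_le (fun _ : ℕ => A) g f n
  rw [PiNat.mem_cylinder_iff] at this
  exact this.symm

lemma stream_apply_eq_of_dist_lt {A : Type*} {f g : ℕ → A} {n : ℕ}
    (h : dist f g < (1/2 : ℝ)^n) {i : ℕ} (hi : i ≤ n) : f i = g i :=
  PiNat.apply_eq_of_dist_lt h hi

lemma stream_dist_eq_of_ne {A : Type*} {f g : ℕ → A} (h : f ≠ g) :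
    dist f g = (1/2 : ℝ)^(PiNat.firstDiff f g) := PiNat.dist_eq_of_ne h

/-- A δ-causal transformer is a (1/2)^δ-contraction. -/
lemma causal_to_contraction {A B : Type*} (T : (ℕ → A) → Set (ℕ → B)) (δ : ℕ)
    (h : IsCausal δ T) : IsMultiContraction ((1/2 : ℝ)^δ) T := by
  intro f g u hu
  by_cases hfg : f = g
  · subst hfg
    refine ⟨u, hu, ?_⟩
    simp [dist_self]
  · set k := PiNat.firstDiff f g with hk
    have hagree : ∀ i < k, f i = g i := fun i hi => PiNat.apply_eq_of_lt_firstDiff hi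
    have himg := h k f g hagree
    have hmem : (fun (i : Fin (k + δ)) => u (i : ℕ)) ∈
        (fun (u : ℕ → B) (i : Fin (k + δ)) => u (i : ℕ)) '' T g := by
      rw [← himg]; exact ⟨u, hu, rfl⟩
    obtain ⟨v, hv, hvu⟩ := hmem
    refine ⟨v, hv, ?_⟩
    have hagree' : ∀ i < k + δ, v i = u i := by
      intro i hi
      exact congrFun hvu ⟨i, hi⟩
    have : dist v u ≤ (1/2 : ℝ)^(k + δ) := stream_dist_le_iff.2 hagree'
    rw [dist_comm] at this
    calc dist u v ≤ (1/2 : ℝ)^(k + δ) := this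
      _ = (1/2 : ℝ)^δ * (1/2 : ℝ)^k := by rw [pow_add]; ring
      _ = (1/2 : ℝ)^δ * dist f g := by rw [stream_dist_eq_of_ne hfg]

/-- An l-contraction with l ≤ certain bound yields causality: if for agreeing prefixes the
outputs can be matched up to index k + δ, images of restrictions agree. -/
lemma contraction_to_causal_aux {A B : Type*} (T : (ℕ → A) → Set (ℕ → B)) (δ : ℕ)
    (H : ∀ (k : ℕ) (f g : ℕ → A), (∀ i < k, f i = g i) →
      ∀ u ∈ T f, ∃ v ∈ T g, ∀ i < k + δ, u i = v i) : IsCausal δ T := by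
  intro k f g hagree
  apply Set.Subset.antisymm
  · rintro _ ⟨u, hu, rfl⟩
    obtain ⟨v, hv, hvu⟩ := H k f g hagree u hu
    exact ⟨v, hv, funext fun i => (hvu i i.2).symm⟩
  · rintro _ ⟨u, hu, rfl⟩
    obtain ⟨v, hv, hvu⟩ := H k g f (fun i hi => (hagree i hi).symm) u hu
    exact ⟨v, hv, funext fun i => (hvu i i.2).symm⟩

/-- A multivalued stream transformer with nonempty values is weakly causal iff it is
nonexpansive, and strongly causal iff it is contractive. -/
theorem causality_contraction_connection {A B : Type*}
    (T : (ℕ → A) → Set (ℕ → B)) (hne : ∀ f, (T f).Nonempty) :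
    (IsCausal 0 T ↔ IsMultiContraction 1 T) ∧
      ((∃ δ : ℕ, 1 ≤ δ ∧ IsCausal δ T) ↔
        ∃ l : ℝ, 0 ≤ l ∧ l < 1 ∧ IsMultiContraction l T) := by
  constructor
  · constructor
    · intro h
      have := causal_to_contraction T 0 h
      simpa using this
    · intro h
      apply contraction_to_causal_aux T 0
      intro k f g hagree u hu
      obtain ⟨v, hv, hvu⟩ := h f g u hu
      refine ⟨v, hv, ?_⟩
      have hd : dist f g ≤ (1/2 : ℝ)^k := stream_dist_le_iff.2 hagree
      have : dist u v ≤ (1/2 : ℝ)^k := by linarith [hvu]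
      intro i hi
      exact stream_dist_le_iff.1 this i (by omega)
  · constructor
    · rintro ⟨δ, hδ, h⟩
      refine ⟨(1/2 : ℝ)^δ, by positivity, ?_, causal_to_contraction T δ h⟩
      calc (1/2 : ℝ)^δ ≤ (1/2 : ℝ)^1 := by
            apply pow_le_pow_of_le_one (by norm_num) (by norm_num) hδ
        _ < 1 := by norm_num
    · rintro ⟨l, hl0, hl1, h⟩
      refine ⟨1, le_refl 1, ?_⟩
      apply contraction_to_causal_aux T 1
      intro k f g hagree u hu
      by_cases hfg : f = g
      · subst hfg
        obtain ⟨v, hv, hvu⟩ := h f f u hu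
        simp only [dist_self, mul_zero] at hvu
        have : u = v := eq_of_dist_eq_zero (le_antisymm hvu dist_nonneg)
        exact ⟨v, hv, fun i _ => congrFun this i⟩
      · obtain ⟨v, hv, hvu⟩ := h f g u hu
        refine ⟨v, hv, ?_⟩
        have hd : dist f g ≤ (1/2 : ℝ)^k := stream_dist_le_iff.2 hagree
        have hdpos : 0 < dist f g := dist_pos.2 hfg
        have hlt : dist u v < (1/2 : ℝ)^k := by
          calc dist u v ≤ l * dist f g := hvu
            _ < 1 * dist f g := by
              apply mul_lt_mul_of_pos_right hl1 hdpos
            _ = dist f g := one_mul _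
            _ ≤ (1/2 : ℝ)^k := hd
        intro i hi
        exact stream_apply_eq_of_dist_lt hlt (by omega)
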